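/- arXiv:2109.13495 — 3 statements merged into one kernel-verified Lean document; each statement's English description precedes it below -/
import Mathlib

section
/- Let A and B be n×n nonnegative matrices with A ⊗ B = B ⊗ A. Then μ(A ⊕ B) ≤ max(μ(A), μ(B)). Moreover, if A and B are irreducible, then μ(A ⊕ B) = max(μ(A), μ(B)). -/
open Filter Topology

/-- Max-times product of two square nonnegative matrices. -/
noncomputable def mProd {m : Type*} [Fintype m] (A B : Matrix m m NNReal) : Matrix m m NNReal :=
  fun i j => Finset.univ.sup fun k => A i k * B k j

/-- Max-times powers: `mPow A 0 = I`, `mPow A (k+1) = A ⊗ mPow A k`. -/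
noncomputable def mPow {m : Type*} [Fintype m] [DecidableEq m] (A : Matrix m m NNReal) :
    ℕ → Matrix m m NNReal
  | 0 => 1
  | k + 1 => mProd A (mPow A k)

/-- Max-times action of a matrix on a nonnegative vector. -/
noncomputable def mVec {m : Type*} [Fintype m] (A : Matrix m m NNReal) (x : m → NNReal) :
    m → NNReal :=
  fun i => Finset.univ.sup fun k => A i k * x k

/-- Maximum circuit geometric mean of a nonnegative matrix. -/
noncomputable def mu {m : Type*} [Fintype m] [DecidableEq m] (A : Matrix m m NNReal) : NNReal :=
  (Finset.Icc 1 (Fintype.card m)).sup fun ℓ =>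
    Finset.univ.sup fun i => (mPow A ℓ i i) ^ ((ℓ : ℝ)⁻¹)

/-- A nonnegative matrix is irreducible if its weighted digraph is strongly connected. -/
def MaxIrreducible {m : Type*} [Fintype m] [DecidableEq m] (A : Matrix m m NNReal) : Prop :=
  ∀ i j, ∃ k : ℕ, 1 ≤ k ∧ 0 < mPow A k i j

set_option linter.unusedSectionVars false
namespace MaxAlg

lemma sup_mul {ι : Type*} (s : Finset ι) (f : ι → NNReal) (a : NNReal) :
    s.sup f * a = s.sup fun i => f i * a := by
  rcases s.eq_empty_or_nonempty with h | h
  · simp [h]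
  · obtain ⟨i0, hi0, hs⟩ := Finset.exists_mem_eq_sup s h f
    apply le_antisymm
    · rw [hs]; exact Finset.le_sup (f := fun i => f i * a) hi0 
    · exact Finset.sup_le fun i hi => mul_le_mul_left (Finset.le_sup hi) a

lemma mul_sup {ι : Type*} (s : Finset ι) (f : ι → NNReal) (a : NNReal) :
    a * s.sup f = s.sup fun i => a * f i := by
  rw [mul_comm, sup_mul]; simp [mul_comm]

variable {m : Type*} [Fintype m] [DecidableEq m]

lemma mProd_apply (A B : Matrix m m NNReal) (i j : m) :
    mProd A B i j = Finset.univ.sup fun k => A i k * B k j := rfl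

lemma mProd_assoc (A B C : Matrix m m NNReal) : mProd (mProd A B) C = mProd A (mProd B C) := by
  funext i j
  simp only [mProd_apply, sup_mul, mul_sup, mul_assoc]
  exact Finset.sup_comm _ _ _

lemma mProd_one (A : Matrix m m NNReal) : mProd A 1 = A := by
  funext i j
  simp only [mProd_apply, Matrix.one_apply]
  apply le_antisymm
  · exact Finset.sup_le fun k _ => by split <;> simp_all
  · simpa using Finset.le_sup (f := fun k => A i k * if k = j then (1:NNReal) else 0)
      (Finset.mem_univ j)

lemma one_mProd (A : Matrix m m NNReal) : mProd 1 A = A := by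
  funext i j
  simp only [mProd_apply, Matrix.one_apply]
  apply le_antisymm
  · exact Finset.sup_le fun k _ => by split <;> simp_all
  · simpa using Finset.le_sup (f := fun k => (if i = k then (1:NNReal) else 0) * A k j)
      (Finset.mem_univ i)

lemma mPow_succ (A : Matrix m m NNReal) (k : ℕ) : mPow A (k+1) = mProd A (mPow A k) := rfl

lemma mPow_add (A : Matrix m m NNReal) (p q : ℕ) :
    mPow A (p + q) = mProd (mPow A p) (mPow A q) := by
  induction p with
  | zero => simp [mPow, one_mProd]
  | succ p ih =>
      have : p + 1 + q = (p + q) + 1 := by omega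
      rw [this, mPow_succ, ih, mPow_succ, mProd_assoc]

lemma mProd_le_mProd {A A' B B' : Matrix m m NNReal}
    (hA : ∀ i j, A i j ≤ A' i j) (hB : ∀ i j, B i j ≤ B' i j) :
    ∀ i j, mProd A B i j ≤ mProd A' B' i j := by
  intro i j
  exact Finset.sup_mono_fun fun k _ => mul_le_mul' (hA i k) (hB k j)

lemma mPow_le_mPow {A A' : Matrix m m NNReal} (hA : ∀ i j, A i j ≤ A' i j) :
    ∀ t i j, mPow A t i j ≤ mPow A' t i j := by
  intro t
  induction t with
  | zero => intro i j; exact le_rfl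
  | succ t ih => exact mProd_le_mProd hA ih


section Comm
variable {A B : Matrix m m NNReal} (hcomm : mProd A B = mProd B A)

include hcomm

lemma comm_pow_right (q : ℕ) : mProd A (mPow B q) = mProd (mPow B q) A := by
  induction q with
  | zero => rw [show mPow B 0 = 1 from rfl, mProd_one, one_mProd]
  | succ q ih =>
      rw [mPow_succ, ← mProd_assoc, hcomm, mProd_assoc, ih, ← mProd_assoc]

lemma comm_pow_pow (p q : ℕ) : mProd (mPow A p) (mPow B q) = mProd (mPow B q) (mPow A p) := by
  induction p with
  | zero => rw [show mPow A 0 = 1 from rfl, mProd_one, one_mProd]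
  | succ p ih =>
      rw [mPow_succ, mProd_assoc, ih, ← mProd_assoc, comm_pow_right hcomm, mProd_assoc,
        ← mProd_assoc]

/-- `(A^p ⊗ B^q)^t = A^{pt} ⊗ B^{qt}` for commuting `A`, `B`. -/
lemma mPow_mixed (p q : ℕ) : ∀ t : ℕ,
    mPow (mProd (mPow A p) (mPow B q)) t = mProd (mPow A (p * t)) (mPow B (q * t)) := by
  intro t
  induction t with
  | zero => simp [mPow, mProd_one]
  | succ t ih =>
      rw [mPow_succ, ih, ← mProd_assoc, mProd_assoc (mPow A p) (mPow B q),
        ← comm_pow_pow hcomm, ← mProd_assoc, ← mPow_add, mProd_assoc, ← mPow_add]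
      have h1 : p + p * t = p * (t + 1) := by ring
      have h2 : q + q * t = q * (t + 1) := by ring
      rw [h1, h2]

end Comm

lemma diag_pow_le (C : Matrix m m NNReal) (i : m) : ∀ t : ℕ, (C i i) ^ t ≤ mPow C t i i := by
  intro t
  induction t with
  | zero => simp [mPow, Matrix.one_apply]
  | succ t ih =>
      calc C i i ^ (t + 1) = C i i * C i i ^ t := by ring
      _ ≤ C i i * mPow C t i i := mul_le_mul_right ih _
      _ ≤ mPow C (t+1) i i := Finset.le_sup (f := fun k => C i k * mPow C t k i)
          (Finset.mem_univ i)

/-- weight of a path of length `t`. -/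
noncomputable def wt (C : Matrix m m NNReal) (t : ℕ) (p : ℕ → m) : NNReal :=
  ∏ s ∈ Finset.range t, C (p s) (p (s+1))

lemma wt_le (C : Matrix m m NNReal) : ∀ (t : ℕ) (p : ℕ → m) (i j : m),
    p 0 = i → p t = j → wt C t p ≤ mPow C t i j := by
  intro t
  induction t with
  | zero =>
      intro p i j h0 ht
      have : i = j := h0 ▸ ht ▸ rfl
      simp [wt, this, mPow, Matrix.one_apply]
  | succ t ih =>
      intro p i j h0 ht
      have hw : wt C (t+1) p = C i (p 1) * wt C t (fun s => p (s+1)) := by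
        rw [wt, Finset.prod_range_succ', ← h0]
        rw [mul_comm]; rfl
      calc wt C (t+1) p ≤ C i (p 1) * mPow C t (p 1) j :=
            hw ▸ mul_le_mul_right (ih _ (p 1) j rfl ht) _
      _ ≤ mPow C (t+1) i j := Finset.le_sup (f := fun k => C i k * mPow C t k j)
          (Finset.mem_univ (p 1))

lemma exists_path (C : Matrix m m NNReal) : ∀ (t : ℕ), 1 ≤ t → ∀ i j : m,
    ∃ p : ℕ → m, p 0 = i ∧ p t = j ∧ mPow C t i j ≤ wt C t p := by
  intro t
  induction t with
  | zero => omega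
  | succ t ih =>
      intro _ i j
      rcases Nat.eq_zero_or_pos t with rfl | ht
      · refine ⟨fun s => if s = 0 then i else j, by simp, by simp, ?_⟩
        have : wt C 1 (fun s => if s = 0 then i else j) = C i j := by
          simp [wt]
        rw [this]
        refine Finset.sup_le fun k _ => ?_
        rcases eq_or_ne k j with rfl | hk
        · simp [mPow, Matrix.one_apply]
        · simp [mPow, Matrix.one_apply, hk]
      · have hne : Nonempty m := ⟨i⟩
        obtain ⟨k0, _, hsup⟩ := Finset.exists_mem_eq_sup (Finset.univ : Finset m)
          Finset.univ_nonempty (fun k => C i k * mPow C t k j)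
        obtain ⟨q, hq0, hqt, hqw⟩ := ih ht k0 j
        refine ⟨fun s => if s = 0 then i else q (s - 1), by simp, by simp [hqt], ?_⟩
        have hw : wt C (t+1) (fun s => if s = 0 then i else q (s - 1))
            = wt C t q * C i (q 0) := by
          rw [wt, Finset.prod_range_succ']
          congr 1
        rw [hw, show mPow C (t+1) i j = Finset.univ.sup fun k => C i k * mPow C t k j from rfl,
          hsup, hq0]
        rw [mul_comm (C i k0)]
        exact mul_le_mul_left hqw _

lemma diag_le_mu_pow (C : Matrix m m NNReal) {ℓ : ℕ} (h1 : 1 ≤ ℓ) (h2 : ℓ ≤ Fintype.card m)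
    (i : m) : mPow C ℓ i i ≤ mu C ^ ℓ := by
  have hmem : ℓ ∈ Finset.Icc 1 (Fintype.card m) := Finset.mem_Icc.mpr ⟨h1, h2⟩
  have hle : (mPow C ℓ i i) ^ ((ℓ : ℝ)⁻¹) ≤ mu C := by
    refine le_trans ?_ (Finset.le_sup (f := fun ℓ =>
      Finset.univ.sup fun i => (mPow C ℓ i i) ^ ((ℓ : ℝ)⁻¹)) hmem)
    exact Finset.le_sup (f := fun i => (mPow C ℓ i i) ^ ((ℓ : ℝ)⁻¹)) (Finset.mem_univ i)
  have hℓ : (ℓ : ℝ) ≠ 0 := by exact_mod_cast Nat.one_le_iff_ne_zero.mp h1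
  have hx : mPow C ℓ i i = ((mPow C ℓ i i) ^ ((ℓ:ℝ)⁻¹)) ^ ℓ := by
    rw [← NNReal.rpow_natCast (_ ^ _) ℓ, ← NNReal.rpow_mul, inv_mul_cancel₀ hℓ,
      NNReal.rpow_one]
  rw [hx]
  exact pow_le_pow_left' hle ℓ

lemma cut (C : Matrix m m NNReal) (t : ℕ) (ht : Fintype.card m < t) (i j : m) :
    ∃ ℓ, 1 ≤ ℓ ∧ ℓ ≤ Fintype.card m ∧ mPow C t i j ≤ mu C ^ ℓ * mPow C (t - ℓ) i j := by
  set n := Fintype.card m with hn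
  obtain ⟨p, hp0, hpt, hple⟩ := exists_path C t (by omega) i j
  obtain ⟨a0, ha0, b0, hb0, hab0, hpab0⟩ := Finset.exists_ne_map_eq_of_card_lt_of_maps_to
    (s := Finset.range (n+1)) (t := (Finset.univ : Finset m)) (by simp [hn])
    (fun x _ => Finset.mem_univ (p x))
  obtain ⟨a, b, hab, hbn, hpab⟩ : ∃ a b, a < b ∧ b ≤ n ∧ p a = p b := by
    have h1 : a0 < n + 1 := Finset.mem_range.mp ha0
    have h2 : b0 < n + 1 := Finset.mem_range.mp hb0
    rcases lt_or_gt_of_ne hab0 with h | h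
    · exact ⟨a0, b0, h, by omega, hpab0⟩
    · exact ⟨b0, a0, h, by omega, hpab0.symm⟩
  obtain ⟨ℓ, hl⟩ : ∃ ℓ, b = a + ℓ := ⟨b - a, by omega⟩
  subst hl
  have hl1 : 1 ≤ ℓ := by omega
  have hln : ℓ ≤ n := by omega
  refine ⟨ℓ, hl1, hln, ?_⟩
  set f : ℕ → NNReal := fun s => C (p s) (p (s+1)) with hf
  have hsplit : wt C t p = ((∏ s ∈ Finset.Ico 0 a, f s) * (∏ s ∈ Finset.Ico a (a+ℓ), f s))
      * (∏ s ∈ Finset.Ico (a+ℓ) t, f s) := by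
    rw [Finset.prod_Ico_consecutive f (Nat.zero_le a) (by omega : a ≤ a + ℓ),
      Finset.prod_Ico_consecutive f (Nat.zero_le (a+ℓ)) (by omega : a + ℓ ≤ t),
      wt, Finset.range_eq_Ico]
  -- the circuit bound
  have hcirc : (∏ s ∈ Finset.Ico a (a+ℓ), f s) ≤ mu C ^ ℓ := by
    have hw : (∏ s ∈ Finset.Ico a (a+ℓ), f s) = wt C ℓ (fun s => p (a + s)) := by
      rw [Finset.prod_Ico_eq_prod_range, wt]
      simp only [Nat.add_sub_cancel_left]
      rfl
    rw [hw]
    refine le_trans (wt_le C ℓ _ (p a) (p a) (by simp) ?_) (diag_le_mu_pow C hl1 hln (p a))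
    exact hpab.symm
  -- the shortened path
  set q : ℕ → m := fun s => if s < a then p s else p (s + ℓ) with hq
  have hq0 : q 0 = i := by
    rcases Nat.eq_zero_or_pos a with rfl | ha
    · have h1 : q 0 = p (0 + ℓ) := if_neg (by omega)
      rw [h1, ← hpab, hp0]
    · have h1 : q 0 = p 0 := if_pos ha
      rw [h1, hp0]
  have hqt : q (t - ℓ) = j := by
    have h1 : q (t - ℓ) = p (t - ℓ + ℓ) := if_neg (by omega)
    rw [h1, show t - ℓ + ℓ = t by omega, hpt]
  have hrest : (∏ s ∈ Finset.Ico 0 a, f s) * (∏ s ∈ Finset.Ico (a+ℓ) t, f s)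
      = wt C (t - ℓ) q := by
    rw [wt, Finset.range_eq_Ico,
      ← Finset.prod_Ico_consecutive (fun s => C (q s) (q (s+1))) (Nat.zero_le a)
        (by omega : a ≤ t - ℓ)]
    congr 1
    · apply Finset.prod_congr rfl
      intro s hs
      have hs' : s < a := (Finset.mem_Ico.mp hs).2
      have h1 : q s = p s := if_pos hs'
      have h2 : q (s+1) = p (s+1) := by
        rcases Nat.lt_or_ge (s+1) a with h | h
        · exact if_pos h
        · have heq : s + 1 = a := by omega
          have h3 : q (s+1) = p (s+1+ℓ) := if_neg (by omega)
          rw [h3, heq]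
          exact hpab.symm
      rw [hf]; dsimp only; rw [h1, h2]
    · rw [Finset.prod_Ico_eq_prod_range, Finset.prod_Ico_eq_prod_range,
        show t - ℓ - a = t - (a + ℓ) by omega]
      apply Finset.prod_congr rfl
      intro k _
      have h1 : q (a + k) = p (a + ℓ + k) := by
        have : q (a + k) = p (a + k + ℓ) := if_neg (by omega)
        rw [this, show a + k + ℓ = a + ℓ + k by omega]
      have h2 : q (a + k + 1) = p (a + ℓ + k + 1) := by
        have : q (a + k + 1) = p (a + k + 1 + ℓ) := if_neg (by omega)
        rw [this, show a + k + 1 + ℓ = a + ℓ + k + 1 by omega]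
      rw [hf]; dsimp only; rw [h1, h2]
  calc mPow C t i j ≤ wt C t p := hple
    _ = (∏ s ∈ Finset.Ico a (a+ℓ), f s) *
        ((∏ s ∈ Finset.Ico 0 a, f s) * (∏ s ∈ Finset.Ico (a+ℓ) t, f s)) := by
          rw [hsplit]; ring
    _ ≤ mu C ^ ℓ * wt C (t - ℓ) q := by rw [hrest]; exact mul_le_mul_left hcirc _
    _ ≤ mu C ^ ℓ * mPow C (t - ℓ) i j :=
        mul_le_mul_right (wt_le C (t - ℓ) q i j hq0 hqt) _

noncomputable def maxEnt (C : Matrix m m NNReal) : NNReal :=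
  Finset.univ.sup fun i => Finset.univ.sup fun j => C i j

lemma le_maxEnt (C : Matrix m m NNReal) (i j : m) : C i j ≤ maxEnt C :=
  le_trans (Finset.le_sup (f := fun j => C i j) (Finset.mem_univ j))
    (Finset.le_sup (f := fun i => Finset.univ.sup fun j => C i j) (Finset.mem_univ i))

lemma mPow_le_maxEnt_pow (C : Matrix m m NNReal) : ∀ t (i j : m),
    mPow C t i j ≤ maxEnt C ^ t := by
  intro t
  induction t with
  | zero =>
      intro i j
      rcases eq_or_ne i j with rfl | h
      · simp [mPow, Matrix.one_apply]
      · simp [mPow, Matrix.one_apply, h]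
  | succ t ih =>
      intro i j
      refine Finset.sup_le fun k _ => ?_
      calc C i k * mPow C t k j ≤ maxEnt C * maxEnt C ^ t :=
            mul_le_mul' (le_maxEnt C i k) (ih k j)
      _ = maxEnt C ^ (t+1) := (pow_succ' _ _).symm

noncomputable def Kc (C : Matrix m m NNReal) : NNReal := max 1 (max (maxEnt C) (mu C))

lemma one_le_Kc (C : Matrix m m NNReal) : 1 ≤ Kc C := le_max_left _ _
lemma maxEnt_le_Kc (C : Matrix m m NNReal) : maxEnt C ≤ Kc C :=
  le_trans (le_max_left _ _) (le_max_right _ _)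
lemma mu_le_Kc (C : Matrix m m NNReal) : mu C ≤ Kc C :=
  le_trans (le_max_right _ _) (le_max_right _ _)

lemma growth (C : Matrix m m NNReal) : ∀ t (i j : m),
    mPow C t i j ≤ mu C ^ (t - Fintype.card m) * Kc C ^ (2 * Fintype.card m) := by
  intro t
  induction t using Nat.strong_induction_on with
  | _ t ih =>
  intro i j
  set n := Fintype.card m with hn
  by_cases htn : t ≤ n
  · have h0 : t - n = 0 := by omega
    rw [h0, pow_zero, one_mul]
    calc mPow C t i j ≤ maxEnt C ^ t := mPow_le_maxEnt_pow C t i j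
      _ ≤ Kc C ^ t := pow_le_pow_left' (maxEnt_le_Kc C) t
      _ ≤ Kc C ^ (2 * n) := pow_le_pow_right' (one_le_Kc C) (by omega)
  · obtain ⟨ℓ, hl1, hln, hcut⟩ := cut C t (by omega) i j
    by_cases h2 : n ≤ t - ℓ
    · calc mPow C t i j ≤ mu C ^ ℓ * mPow C (t - ℓ) i j := hcut
        _ ≤ mu C ^ ℓ * (mu C ^ (t - ℓ - n) * Kc C ^ (2 * n)) :=
            mul_le_mul_right (ih (t - ℓ) (by omega) i j) _
        _ = mu C ^ (t - n) * Kc C ^ (2 * n) := by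
            rw [← mul_assoc, ← pow_add, show ℓ + (t - ℓ - n) = t - n by omega]
    · -- t - ℓ < n : use the crude bound on the shortened path
      calc mPow C t i j ≤ mu C ^ ℓ * mPow C (t - ℓ) i j := hcut
        _ ≤ mu C ^ ℓ * Kc C ^ (t - ℓ) := by
            refine mul_le_mul_right ?_ _
            exact le_trans (mPow_le_maxEnt_pow C _ i j)
              (pow_le_pow_left' (maxEnt_le_Kc C) _)
        _ = mu C ^ (t - n) * (mu C ^ (ℓ - (t - n)) * Kc C ^ (t - ℓ)) := by
            rw [← mul_assoc, ← pow_add, show t - n + (ℓ - (t - n)) = ℓ by omega]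
        _ ≤ mu C ^ (t - n) * (Kc C ^ (ℓ - (t - n)) * Kc C ^ (t - ℓ)) :=
            mul_le_mul_right (mul_le_mul_left (pow_le_pow_left' (mu_le_Kc C) _) _) _
        _ = mu C ^ (t - n) * Kc C ^ (ℓ - (t - n) + (t - ℓ)) := by rw [← pow_add]
        _ ≤ mu C ^ (t - n) * Kc C ^ (2 * n) :=
            mul_le_mul_right (pow_le_pow_right' (one_le_Kc C) (by omega)) _

lemma pow_squeeze {x y c d : NNReal} (hc : c ≠ 0) (m0 : ℕ)
    (h : ∀ t, m0 ≤ t → c * x ^ t ≤ d * y ^ t) : x ≤ y := by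
  by_contra hxy
  push_neg at hxy
  have hx0 : x ≠ 0 := by
    intro h0
    rw [h0] at hxy
    exact (not_lt_of_ge zero_le) hxy
  have hd0 : d ≠ 0 := by
    intro h0
    have h1 := h m0 le_rfl
    rw [h0, zero_mul] at h1
    have h2 : c * x ^ m0 = 0 := le_antisymm h1 zero_le
    rcases mul_eq_zero.mp h2 with h3 | h3
    · exact hc h3
    · exact hx0 (pow_eq_zero_iff'.mp h3).1
  have hr1 : y / x < 1 := NNReal.div_lt_one_of_lt hxy
  have hcd : 0 < c / d := by
    rw [pos_iff_ne_zero]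
    exact div_ne_zero hc hd0
  obtain ⟨t0, ht0⟩ := NNReal.exists_pow_lt_of_lt_one hcd hr1
  set t := max m0 t0 with htdef
  have h1 : (y / x) ^ t ≤ (y / x) ^ t0 :=
    pow_le_pow_of_le_one zero_le hr1.le (le_max_right _ _)
  have h2 : (y / x) ^ t < c / d := lt_of_le_of_lt h1 ht0
  have hy : y ^ t = (y / x) ^ t * x ^ t := by
    rw [← mul_pow, div_mul_cancel₀ y hx0]
  have h3 : d * y ^ t < c * x ^ t := by
    rw [hy, ← mul_assoc]
    have hxt : (0:NNReal) < x ^ t := pos_iff_ne_zero.mpr (pow_ne_zero _ hx0)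
    refine mul_lt_mul_of_pos_right ?_ hxt
    calc d * (y / x) ^ t < d * (c / d) := by
          exact mul_lt_mul_of_pos_left h2 (pos_iff_ne_zero.mpr hd0)
      _ = c := by rw [mul_div_cancel₀ c hd0]
  exact absurd (h t (le_max_left _ _)) (not_le_of_gt h3)

lemma mixed_diag {A B : Matrix m m NNReal} (hcomm : mProd A B = mProd B A)
    {p q ℓ : ℕ} (hpq : p + q = ℓ) (h1 : 1 ≤ ℓ) (hn : ℓ ≤ Fintype.card m) (i : m) :
    mProd (mPow A p) (mPow B q) i i ≤ mu A ^ p * mu B ^ q := by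
  set n := Fintype.card m with hndef
  rcases Nat.eq_zero_or_pos p with rfl | hp
  · rw [show mPow A 0 = 1 from rfl, one_mProd, pow_zero, one_mul]
    exact diag_le_mu_pow B (by omega) (by omega) i
  rcases Nat.eq_zero_or_pos q with rfl | hq
  · rw [show mPow B 0 = 1 from rfl, mProd_one, pow_zero, mul_one]
    exact diag_le_mu_pow A (by omega) (by omega) i
  set x := mProd (mPow A p) (mPow B q) i i with hxdef
  have key : ∀ t : ℕ,
      x ^ t ≤ mu A ^ (p*t - n) * Kc A ^ (2*n) * (mu B ^ (q*t - n) * Kc B ^ (2*n)) := by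
    intro t
    calc x ^ t ≤ mPow (mProd (mPow A p) (mPow B q)) t i i := diag_pow_le _ i t
      _ = mProd (mPow A (p*t)) (mPow B (q*t)) i i := by rw [mPow_mixed hcomm]
      _ ≤ _ := Finset.sup_le fun k _ => mul_le_mul' (growth A (p*t) i k) (growth B (q*t) k i)
  have hzero : ∀ z : NNReal, x ^ (n+1) ≤ 0 → x ≤ z := by
    intro z h
    have h2 : x ^ (n+1) = 0 := le_antisymm h zero_le
    rw [(pow_eq_zero_iff'.mp h2).1]
    exact zero_le
  rcases eq_or_ne (mu A) 0 with hA0 | hA0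
  · have h := key (n+1)
    rw [hA0, zero_pow (show p*(n+1) - n ≠ 0 by
      have : n + 1 ≤ p * (n+1) := Nat.le_mul_of_pos_left (n+1) hp
      omega)] at h
    simp only [zero_mul] at h
    exact hzero _ h
  rcases eq_or_ne (mu B) 0 with hB0 | hB0
  · have h := key (n+1)
    rw [hB0, zero_pow (show q*(n+1) - n ≠ 0 by
      have : n + 1 ≤ q * (n+1) := Nat.le_mul_of_pos_left (n+1) hq
      omega)] at h
    simp only [zero_mul, mul_zero] at h
    exact hzero _ h
  apply pow_squeeze (c := mu A ^ n * mu B ^ n) (d := Kc A ^ (2*n) * Kc B ^ (2*n))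
    (mul_ne_zero (pow_ne_zero _ hA0) (pow_ne_zero _ hB0)) n
  intro t htn
  have hpt : n ≤ p * t := le_trans htn (Nat.le_mul_of_pos_left t hp)
  have hqt : n ≤ q * t := le_trans htn (Nat.le_mul_of_pos_left t hq)
  have e1 : mu A ^ n * mu A ^ (p*t - n) = mu A ^ (p*t) := by
    rw [mul_comm]; exact pow_sub_mul_pow _ hpt
  have e2 : mu B ^ n * mu B ^ (q*t - n) = mu B ^ (q*t) := by
    rw [mul_comm]; exact pow_sub_mul_pow _ hqt
  calc mu A ^ n * mu B ^ n * x ^ t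
      ≤ mu A ^ n * mu B ^ n *
        (mu A ^ (p*t - n) * Kc A ^ (2*n) * (mu B ^ (q*t - n) * Kc B ^ (2*n))) :=
        mul_le_mul_right (key t) _
    _ = (mu A ^ n * mu A ^ (p*t - n)) * (mu B ^ n * mu B ^ (q*t - n)) *
        (Kc A ^ (2*n) * Kc B ^ (2*n)) := by ring
    _ = Kc A ^ (2*n) * Kc B ^ (2*n) * ((mu A ^ p * mu B ^ q) ^ t) := by
        rw [e1, e2, mul_pow, ← pow_mul, ← pow_mul]; ring

lemma oplus_pow_le {A B : Matrix m m NNReal} (hcomm : mProd A B = mProd B A) :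
    ∀ (ℓ : ℕ) (i j : m), mPow (fun i j => max (A i j) (B i j)) ℓ i j ≤
      (Finset.range (ℓ+1)).sup fun p => mProd (mPow A p) (mPow B (ℓ - p)) i j := by
  intro ℓ
  induction ℓ with
  | zero =>
      intro i j
      have h0 : mPow (fun i j => max (A i j) (B i j)) 0 i j
          = mProd (mPow A 0) (mPow B (0 - 0)) i j := by
        rw [show mPow A 0 = 1 from rfl, one_mProd]
        rfl
      rw [h0]
      exact Finset.le_sup (f := fun p => mProd (mPow A p) (mPow B (0 - p)) i j)
        (Finset.mem_range.mpr (by omega : 0 < 1))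
  | succ ℓ ih =>
      intro i j
      show (Finset.univ.sup fun k => (fun i j => max (A i j) (B i j)) i k *
        mPow (fun i j => max (A i j) (B i j)) ℓ k j) ≤ _
      refine Finset.sup_le fun k _ => ?_
      calc (fun i j => max (A i j) (B i j)) i k * mPow (fun i j => max (A i j) (B i j)) ℓ k j
          ≤ max (A i k) (B i k) *
            (Finset.range (ℓ+1)).sup (fun p => mProd (mPow A p) (mPow B (ℓ - p)) k j) :=
            mul_le_mul_right (ih k j) _
        _ ≤ _ := by
            rw [mul_sup]
            refine Finset.sup_le fun p hp => ?_
            have hpℓ : p ≤ ℓ := Nat.lt_succ_iff.mp (Finset.mem_range.mp hp)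
            rcases max_choice (A i k) (B i k) with hmax | hmax
            · rw [hmax]
              have hstep : A i k * mProd (mPow A p) (mPow B (ℓ - p)) k j
                  ≤ mProd (mPow A (p+1)) (mPow B (ℓ - p)) i j := by
                rw [show mPow A (p+1) = mProd A (mPow A p) from rfl, mProd_assoc]
                exact Finset.le_sup
                  (f := fun k => A i k * mProd (mPow A p) (mPow B (ℓ - p)) k j)
                  (Finset.mem_univ k)
              refine le_trans hstep ?_
              have : ℓ - p = (ℓ + 1) - (p + 1) := by omega
              rw [this]
              exact Finset.le_sup
                (f := fun p => mProd (mPow A p) (mPow B (ℓ + 1 - p)) i j)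
                (Finset.mem_range.mpr (by omega : p + 1 < ℓ + 2))
            · rw [hmax]
              have hstep : B i k * mProd (mPow A p) (mPow B (ℓ - p)) k j
                  ≤ mProd (mPow A p) (mPow B (ℓ - p + 1)) i j := by
                have hBA : mProd B (mPow A p) = mProd (mPow A p) B :=
                  comm_pow_right (A := B) (B := A) hcomm.symm p
                have hrw : mProd (mPow A p) (mPow B (ℓ - p + 1))
                    = mProd B (mProd (mPow A p) (mPow B (ℓ - p))) := by
                  rw [show mPow B (ℓ - p + 1) = mProd B (mPow B (ℓ - p)) from rfl,
                    ← mProd_assoc, ← hBA, mProd_assoc]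
                rw [hrw]
                exact Finset.le_sup
                  (f := fun k => B i k * mProd (mPow A p) (mPow B (ℓ - p)) k j)
                  (Finset.mem_univ k)
              refine le_trans hstep ?_
              have : ℓ - p + 1 = (ℓ + 1) - p := by omega
              rw [this]
              exact Finset.le_sup
                (f := fun p => mProd (mPow A p) (mPow B (ℓ + 1 - p)) i j)
                (Finset.mem_range.mpr (by omega : p < ℓ + 2))

lemma mu_mono {A A' : Matrix m m NNReal} (h : ∀ i j, A i j ≤ A' i j) : mu A ≤ mu A' := by
  refine Finset.sup_mono_fun fun ℓ _ => Finset.sup_mono_fun fun i _ => ?_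
  exact NNReal.rpow_le_rpow (mPow_le_mPow h ℓ i i) (by positivity)

end MaxAlg

theorem stmt_13 (n : ℕ) (A B : Matrix (Fin n) (Fin n) NNReal)
    (hcomm : mProd A B = mProd B A) :
    mu (fun i j => max (A i j) (B i j)) ≤ max (mu A) (mu B) ∧
      (MaxIrreducible A → MaxIrreducible B →
        mu (fun i j => max (A i j) (B i j)) = max (mu A) (mu B)) := by
  have hle : mu (fun i j => max (A i j) (B i j)) ≤ max (mu A) (mu B) := by
    show (Finset.Icc 1 (Fintype.card (Fin n))).sup (fun ℓ => Finset.univ.sup fun i =>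
      (mPow (fun i j => max (A i j) (B i j)) ℓ i i) ^ ((ℓ : ℝ)⁻¹)) ≤ max (mu A) (mu B)
    refine Finset.sup_le fun ℓ hℓ => Finset.sup_le fun i _ => ?_
    obtain ⟨hl1, hln⟩ := Finset.mem_Icc.mp hℓ
    have hbound : mPow (fun i j => max (A i j) (B i j)) ℓ i i ≤ (max (mu A) (mu B)) ^ ℓ := by
      refine le_trans (MaxAlg.oplus_pow_le hcomm ℓ i i) (Finset.sup_le fun p hp => ?_)
      have hpℓ : p ≤ ℓ := Nat.lt_succ_iff.mp (Finset.mem_range.mp hp)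
      calc mProd (mPow A p) (mPow B (ℓ - p)) i i ≤ mu A ^ p * mu B ^ (ℓ - p) :=
            MaxAlg.mixed_diag hcomm (by omega) hl1 hln i
        _ ≤ (max (mu A) (mu B)) ^ p * (max (mu A) (mu B)) ^ (ℓ - p) :=
            mul_le_mul' (pow_le_pow_left' (le_max_left _ _) _)
              (pow_le_pow_left' (le_max_right _ _) _)
        _ = (max (mu A) (mu B)) ^ ℓ := by rw [← pow_add]; congr 1; omega
    have hℓ0 : (ℓ : ℝ) ≠ 0 := by exact_mod_cast Nat.one_le_iff_ne_zero.mp hl1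
    have hstep := NNReal.rpow_le_rpow hbound (inv_nonneg.mpr (Nat.cast_nonneg ℓ))
    refine le_trans hstep ?_
    rw [← NNReal.rpow_natCast (max (mu A) (mu B)) ℓ, ← NNReal.rpow_mul,
      mul_inv_cancel₀ hℓ0, NNReal.rpow_one]
  refine ⟨hle, fun _ _ => le_antisymm hle (max_le ?_ ?_)⟩
  · exact MaxAlg.mu_mono fun i j => le_max_left _ _
  · exact MaxAlg.mu_mono fun i j => le_max_right _ _
end

section
/- Let A be an n×n nonnegative matrix with all entries at most 1, and let B be the Boolean matrix defined by B_{ij} = 1 if A_{ij} = 1 and B_{ij} = 0 if A_{ij} < 1. Then, for an integer q ≥ 1, the following are equivalent: (a) q is the period of B, i.e., q is the least positive integer such that there exists t_0 with B^{⊗(t+q)} = B^{⊗t} for all t ≥ t_0; (b) q is the asymptotic period of the sequence (A^{⊗k})_{k∈ℕ}, i.e., q is the least positive integer such that for each j = 1, …, q the entrywise limit lim_{k→∞} A^{⊗(j+kq)} exists. -/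
open Filter Topology

namespace Stmt15Aux

variable {n : ℕ}

lemma mProd_mono {X X' Y Y' : Matrix (Fin n) (Fin n) NNReal}
    (hX : ∀ i j, X i j ≤ X' i j) (hY : ∀ i j, Y i j ≤ Y' i j) (i j : Fin n) :
    mProd X Y i j ≤ mProd X' Y' i j :=
  Finset.sup_le fun k _ =>
    le_trans (mul_le_mul' (hX i k) (hY k j))
      (Finset.le_sup (f := fun k => X' i k * Y' k j) (Finset.mem_univ k))

lemma mProd_one_left (M : Matrix (Fin n) (Fin n) NNReal) : mProd 1 M = M := by
  funext i j
  refine le_antisymm (Finset.sup_le fun k _ => ?_) ?_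
  · rcases eq_or_ne i k with rfl | h
    · simp [Matrix.one_apply_eq]
    · simp [Matrix.one_apply_ne h]
  · simpa [mProd, Matrix.one_apply_eq] using
      Finset.le_sup (f := fun k => (1 : Matrix (Fin n) (Fin n) NNReal) i k * M k j)
        (Finset.mem_univ i)

lemma mProd_assoc (X Y Z : Matrix (Fin n) (Fin n) NNReal) :
    mProd (mProd X Y) Z = mProd X (mProd Y Z) := by
  funext i j
  show (Finset.univ.sup fun k => (Finset.univ.sup fun l => X i l * Y l k) * Z k j)
      = Finset.univ.sup fun l => X i l * Finset.univ.sup fun k => Y l k * Z k j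
  have h1 : (Finset.univ.sup fun k => (Finset.univ.sup fun l => X i l * Y l k) * Z k j)
      = Finset.univ.sup fun k => Finset.univ.sup fun l => X i l * Y l k * Z k j :=
    Finset.sup_congr rfl fun k _ => NNReal.finset_sup_mul _ _ _
  have h2 : (Finset.univ.sup fun l => X i l * Finset.univ.sup fun k => Y l k * Z k j)
      = Finset.univ.sup fun l => Finset.univ.sup fun k => X i l * (Y l k * Z k j) :=
    Finset.sup_congr rfl fun l _ => NNReal.mul_finset_sup _ _ _
  rw [h1, h2, Finset.sup_comm]
  simp [mul_assoc]

lemma mPow_add (A : Matrix (Fin n) (Fin n) NNReal) (a b : ℕ) :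
    mPow A (a + b) = mProd (mPow A a) (mPow A b) := by
  induction a with
  | zero =>
      rw [Nat.zero_add, show mPow A 0 = 1 from rfl, mProd_one_left]
  | succ a ih =>
      rw [show a + 1 + b = (a + b) + 1 from by omega]
      show mProd A (mPow A (a + b)) = _
      rw [ih, ← mProd_assoc]
      rfl

lemma mPow_le_one {A : Matrix (Fin n) (Fin n) NNReal} (hA : ∀ i j, A i j ≤ 1) :
    ∀ t i j, mPow A t i j ≤ 1 := by
  intro t
  induction t with
  | zero =>
      intro i j
      rcases eq_or_ne i j with rfl | h
      · exact le_of_eq (Matrix.one_apply_eq i)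
      · rw [show mPow A 0 i j = (1 : Matrix (Fin n) (Fin n) NNReal) i j from rfl,
          Matrix.one_apply_ne h]
        exact zero_le
  | succ t ih =>
      intro i j
      exact Finset.sup_le fun k _ => mul_le_one' (hA i k) (ih k j)

end Stmt15Aux

namespace Stmt15Aux

variable {n : ℕ}

lemma mul_eq_one_of {x y : NNReal} (hx : x ≤ 1) (hy : y ≤ 1) (h : x * y = 1) :
    x = 1 ∧ y = 1 := by
  constructor
  · exact le_antisymm hx (h ▸ mul_le_of_le_one_right' hy)
  · exact le_antisymm hy (h ▸ mul_le_of_le_one_left' hx)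

lemma sup_ite_one {P : Fin n → Prop} [DecidablePred P] :
    (Finset.univ.sup fun u => if P u then (1 : NNReal) else 0) = if ∃ u, P u then 1 else 0 := by
  split_ifs with h
  · obtain ⟨u, hu⟩ := h
    refine le_antisymm (Finset.sup_le fun k _ => by split_ifs <;> simp) ?_
    refine le_trans (le_of_eq ?_)
      (Finset.le_sup (f := fun u => if P u then (1 : NNReal) else 0) (Finset.mem_univ u))
    simp [hu]
  · refine le_antisymm (Finset.sup_le fun k _ => ?_) zero_le
    rw [if_neg (fun hk => h ⟨k, hk⟩)]

section AB

variable {A B : Matrix (Fin n) (Fin n) NNReal}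

lemma apow_eq_one_iff (hA : ∀ i j, A i j ≤ 1) (t : ℕ) (i j : Fin n) :
    mPow A (t + 1) i j = 1 ↔ ∃ u, A i u = 1 ∧ mPow A t u j = 1 := by
  constructor
  · intro h
    obtain ⟨u, _, hu⟩ := Finset.exists_mem_eq_sup Finset.univ ⟨i, Finset.mem_univ i⟩
      (fun u => A i u * mPow A t u j)
    have h1 : A i u * mPow A t u j = 1 := by
      rw [← hu]; exact h
    obtain ⟨ha, hb⟩ := mul_eq_one_of (hA i u) (mPow_le_one hA t u j) h1
    exact ⟨u, ha, hb⟩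
  · rintro ⟨u, h1, h2⟩
    refine le_antisymm (Finset.sup_le fun k _ => mul_le_one' (hA i k) (mPow_le_one hA t k j)) ?_
    calc (1 : NNReal) = A i u * mPow A t u j := by rw [h1, h2, one_mul]
      _ ≤ _ := Finset.le_sup (f := fun u => A i u * mPow A t u j) (Finset.mem_univ u)

lemma bpow_eq (hA : ∀ i j, A i j ≤ 1) (hB : ∀ i j, B i j = if A i j = 1 then 1 else 0) :
    ∀ t i j, mPow B t i j = if mPow A t i j = 1 then 1 else 0 := by
  intro t
  induction t with
  | zero =>
      intro i j
      show (1 : Matrix (Fin n) (Fin n) NNReal) i j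
        = if (1 : Matrix (Fin n) (Fin n) NNReal) i j = 1 then 1 else 0
      rcases eq_or_ne i j with rfl | h
      · simp [Matrix.one_apply_eq]
      · simp [Matrix.one_apply_ne h]
  | succ t ih =>
      intro i j
      have hterm : ∀ u, B i u * mPow B t u j
          = if (A i u = 1 ∧ mPow A t u j = 1) then 1 else 0 := by
        intro u
        rw [hB, ih]
        split_ifs with h1 h2 h3 h4 h5 <;> simp_all
      show (Finset.univ.sup fun u => B i u * mPow B t u j) = _
      rw [Finset.sup_congr rfl fun u _ => hterm u, sup_ite_one]
      by_cases hex : ∃ u, A i u = 1 ∧ mPow A t u j = 1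
      · rw [if_pos hex, if_pos ((apow_eq_one_iff hA t i j).mpr hex)]
      · rw [if_neg hex, if_neg (fun h => hex ((apow_eq_one_iff hA t i j).mp h))]

lemma pow_dichotomy (hA : ∀ i j, A i j ≤ 1) (c : NNReal)
    (hc : ∀ i j, A i j ≠ 1 → A i j ≤ c) :
    ∀ t i j, mPow A t i j = 1 ∨ mPow A t i j ≤ c := by
  intro t
  induction t with
  | zero =>
      intro i j
      rcases eq_or_ne i j with rfl | h
      · exact Or.inl (Matrix.one_apply_eq i)
      · refine Or.inr ?_
        rw [show mPow A 0 i j = (1 : Matrix (Fin n) (Fin n) NNReal) i j from rfl,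
          Matrix.one_apply_ne h]
        exact zero_le
  | succ t ih =>
      intro i j
      by_cases hex : ∃ u, A i u * mPow A t u j = 1
      · obtain ⟨u, hu⟩ := hex
        left
        refine le_antisymm (Finset.sup_le fun k _ => mul_le_one' (hA i k) (mPow_le_one hA t k j)) ?_
        calc (1 : NNReal) = A i u * mPow A t u j := hu.symm
          _ ≤ _ := Finset.le_sup (f := fun u => A i u * mPow A t u j) (Finset.mem_univ u)
      · right
        show (Finset.univ.sup fun u => A i u * mPow A t u j) ≤ c
        refine Finset.sup_le fun u _ => ?_
        by_cases h1 : A i u = 1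
        · rw [h1, one_mul]
          rcases ih u j with h | h
          · exact absurd (by rw [h1, one_mul, h] : A i u * mPow A t u j = 1) (fun hh => hex ⟨u, hh⟩)
          · exact h
        · calc A i u * mPow A t u j ≤ c * 1 := mul_le_mul' (hc i u h1) (mPow_le_one hA t u j)
            _ = c := mul_one c

end AB

noncomputable def cVal (A : Matrix (Fin n) (Fin n) NNReal) : NNReal :=
  Finset.univ.sup fun p : Fin n × Fin n => if A p.1 p.2 = 1 then 0 else A p.1 p.2

lemma cVal_lt_one {A : Matrix (Fin n) (Fin n) NNReal} (hA : ∀ i j, A i j ≤ 1) : cVal A < 1 := by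
  have hbot : (⊥ : NNReal) < 1 := by norm_num
  rw [cVal]
  rw [Finset.sup_lt_iff hbot]
  intro p _
  split_ifs with h
  · norm_num
  · exact lt_of_le_of_ne (hA p.1 p.2) h

lemma le_cVal {A : Matrix (Fin n) (Fin n) NNReal} (i j : Fin n) (h : A i j ≠ 1) :
    A i j ≤ cVal A := by
  have := Finset.le_sup (f := fun p : Fin n × Fin n => if A p.1 p.2 = 1 then 0 else A p.1 p.2)
    (Finset.mem_univ (i, j))
  simp only [if_neg h] at this
  exact this

end Stmt15Aux

namespace Stmt15Aux

variable {n : ℕ}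

noncomputable def Aprime (A : Matrix (Fin n) (Fin n) NNReal) : Matrix (Fin n) (Fin n) NNReal :=
  fun u v => if A u v = 1 then 0 else A u v

noncomputable def Dmat (A B : Matrix (Fin n) (Fin n) NNReal) :
    ℕ → ℕ → Matrix (Fin n) (Fin n) NNReal
  | 0, t => mPow B t
  | w + 1, t => fun i j =>
      max (Dmat A B w t i j)
        ((Finset.range t).sup fun s =>
          mProd (mPow B s) (mProd (Aprime A) (Dmat A B w (t - 1 - s))) i j)

variable {A B : Matrix (Fin n) (Fin n) NNReal}

lemma Dmat_zero (t : ℕ) : Dmat A B 0 t = mPow B t := rfl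

lemma Dmat_succ_apply (w t : ℕ) (i j : Fin n) :
    Dmat A B (w + 1) t i j
      = max (Dmat A B w t i j)
        ((Finset.range t).sup fun s =>
          mProd (mPow B s) (mProd (Aprime A) (Dmat A B w (t - 1 - s))) i j) := rfl

lemma Dmat_t0 : ∀ w, Dmat A B w 0 = mPow B 0 := by
  intro w
  induction w with
  | zero => rfl
  | succ w ih =>
      funext i j
      rw [Dmat_succ_apply, ih]
      simp

lemma Aprime_le (i j : Fin n) : Aprime A i j ≤ A i j := by
  rw [Aprime]
  split_ifs
  · exact zero_le
  · exact le_rfl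

lemma bpow_le_apow (hBA : ∀ i j, B i j ≤ A i j) :
    ∀ t i j, mPow B t i j ≤ mPow A t i j := by
  intro t
  induction t with
  | zero => intro i j; exact le_rfl
  | succ t ih => intro i j; exact mProd_mono hBA ih i j

lemma D_le (hBA : ∀ i j, B i j ≤ A i j) :
    ∀ w t i j, Dmat A B w t i j ≤ mPow A t i j := by
  intro w
  induction w with
  | zero => exact bpow_le_apow hBA
  | succ w ih =>
      intro t i j
      rw [Dmat_succ_apply]
      refine max_le (ih t i j) (Finset.sup_le fun s hs => ?_)
      have hs' : s < t := Finset.mem_range.mp hs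
      calc mProd (mPow B s) (mProd (Aprime A) (Dmat A B w (t - 1 - s))) i j
          ≤ mProd (mPow A s) (mProd A (mPow A (t - 1 - s))) i j :=
            mProd_mono (bpow_le_apow hBA s)
              (fun a b => mProd_mono Aprime_le (fun a' b' => ih _ a' b') a b) i j
        _ = mPow A (s + ((t - 1 - s) + 1)) i j := by rw [mPow_add]; rfl
        _ = mPow A t i j := by rw [show s + ((t - 1 - s) + 1) = t from by omega]

lemma D_step (i u : Fin n) (hBiu : B i u = 1) :
    ∀ w t j, Dmat A B w t u j ≤ Dmat A B w (t + 1) i j := by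
  intro w
  induction w with
  | zero =>
      intro t j
      show mPow B t u j ≤ mPow B (t + 1) i j
      calc mPow B t u j = B i u * mPow B t u j := by rw [hBiu, one_mul]
        _ ≤ Finset.univ.sup (fun v => B i v * mPow B t v j) :=
            Finset.le_sup (f := fun v => B i v * mPow B t v j) (Finset.mem_univ u)
    | succ w ih =>
      intro t j
      rw [Dmat_succ_apply, Dmat_succ_apply]
      refine max_le (le_trans (ih t j) (le_max_left _ _)) ?_
      refine le_trans ?_ (le_max_right _ _)
      refine Finset.sup_le fun s hs => ?_
      have hs' : s < t := Finset.mem_range.mp hs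
      have key : ∀ X : Matrix (Fin n) (Fin n) NNReal,
          mProd (mPow B s) X u j ≤ mProd (mPow B (s + 1)) X i j := by
        intro X
        refine Finset.sup_le fun v _ => ?_
        calc mPow B s u v * X v j = B i u * mPow B s u v * X v j := by rw [hBiu, one_mul]
          _ ≤ mPow B (s + 1) i v * X v j := by
              refine mul_le_mul' ?_ le_rfl
              exact Finset.le_sup (f := fun w' => B i w' * mPow B s w' v) (Finset.mem_univ u)
          _ ≤ _ := Finset.le_sup (f := fun v => mPow B (s + 1) i v * X v j) (Finset.mem_univ v)
      refine le_trans (key _) ?_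
      have harith : t + 1 - 1 - (s + 1) = t - 1 - s := by omega
      have hmem : s + 1 ∈ Finset.range (t + 1) := Finset.mem_range.mpr (by omega)
      have hle := Finset.le_sup
        (f := fun s' => mProd (mPow B s') (mProd (Aprime A) (Dmat A B w (t + 1 - 1 - s'))) i j)
        hmem
      rw [harith] at hle
      exact hle

lemma apow_le (hA : ∀ i j, A i j ≤ 1) (hB : ∀ i j, B i j = if A i j = 1 then 1 else 0)
    (c : NNReal) (hc : ∀ i j, A i j ≠ 1 → A i j ≤ c) :
    ∀ t w i j, mPow A t i j ≤ max (Dmat A B w t i j) (c ^ (w + 1)) := by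
  intro t
  induction t with
  | zero =>
      intro w i j
      have h0 : Dmat A B w 0 i j = mPow A 0 i j := by rw [Dmat_t0]; rfl
      exact le_trans (le_of_eq h0.symm) (le_max_left _ _)
  | succ t ih =>
      intro w i j
      show (Finset.univ.sup fun u => A i u * mPow A t u j) ≤ _
      refine Finset.sup_le fun u _ => ?_
      by_cases h1 : A i u = 1
      · have hBiu : B i u = 1 := by rw [hB, if_pos h1]
        rw [h1, one_mul]
        exact le_trans (ih w u j) (max_le_max (D_step i u hBiu w t j) le_rfl)
      · match w with
        | 0 =>
            calc A i u * mPow A t u j ≤ c * 1 := mul_le_mul' (hc i u h1) (mPow_le_one hA t u j)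
              _ = c := mul_one c
              _ ≤ max (Dmat A B 0 (t+1) i j) (c ^ 1) := by rw [pow_one]; exact le_max_right _ _
        | w + 1 =>
            have hIH := ih w u j
            rcases le_total (Dmat A B w t u j) (c ^ (w + 1)) with hcase | hcase
            · have hle : mPow A t u j ≤ c ^ (w + 1) := le_trans hIH (by rw [max_eq_right hcase])
              calc A i u * mPow A t u j ≤ c * c ^ (w + 1) := mul_le_mul' (hc i u h1) hle
                _ = c ^ (w + 1 + 1) := by ring
                _ ≤ _ := le_max_right _ _
            · have hle : mPow A t u j ≤ Dmat A B w t u j := le_trans hIH (by rw [max_eq_left hcase])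
              have hA' : Aprime A i u = A i u := if_neg h1
              refine le_trans ?_ (le_max_left _ _)
              rw [Dmat_succ_apply]
              refine le_trans ?_ (le_max_right _ _)
              have step1 : A i u * mPow A t u j ≤ mProd (Aprime A) (Dmat A B w t) i j := by
                calc A i u * mPow A t u j ≤ Aprime A i u * Dmat A B w t u j := by
                      rw [hA']; exact mul_le_mul' le_rfl hle
                  _ ≤ _ := Finset.le_sup (f := fun v => Aprime A i v * Dmat A B w t v j)
                      (Finset.mem_univ u)
              have step2 : mProd (Aprime A) (Dmat A B w t) i j
                  = mProd (mPow B 0) (mProd (Aprime A) (Dmat A B w (t + 1 - 1 - 0))) i j := by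
                rw [show t + 1 - 1 - 0 = t from by omega,
                  show mPow B 0 = (1 : Matrix (Fin n) (Fin n) NNReal) from rfl, mProd_one_left]
              exact le_trans (le_trans step1 (le_of_eq step2))
                (Finset.le_sup
                  (f := fun s => mProd (mPow B s) (mProd (Aprime A) (Dmat A B w (t + 1 - 1 - s))) i j)
                  (Finset.mem_range.mpr (Nat.succ_pos t)))

end Stmt15Aux

namespace Stmt15Aux

variable {n : ℕ} {A B : Matrix (Fin n) (Fin n) NNReal}

lemma conv_per {f g : ℕ → Matrix (Fin n) (Fin n) NNReal} {q' T₁ T₂ : ℕ} (hq : 1 ≤ q')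
    (hf : ∀ t, T₁ ≤ t → f (t + q') = f t) (hg : ∀ t, T₂ ≤ t → g (t + q') = g t)
    (t : ℕ) (ht : T₁ + T₂ + 2 * q' + 2 ≤ t) (i j : Fin n) :
    ((Finset.range (t + q')).sup fun s => mProd (f s) (g (t + q' - 1 - s)) i j)
      = (Finset.range t).sup fun s => mProd (f s) (g (t - 1 - s)) i j := by
  apply le_antisymm
  · refine Finset.sup_le fun s hs => ?_
    have hs' : s < t + q' := Finset.mem_range.mp hs
    by_cases h1 : T₁ + q' ≤ s
    · have e1 : f s = f (s - q') := by
        have h := hf (s - q') (by omega)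
        rw [show s - q' + q' = s from by omega] at h
        exact h
      have e2 : t + q' - 1 - s = t - 1 - (s - q') := by omega
      rw [e1, e2]
      exact Finset.le_sup (f := fun s => mProd (f s) (g (t - 1 - s)) i j)
        (Finset.mem_range.mpr (by omega))
    · have e1 : g (t + q' - 1 - s) = g (t - 1 - s) := by
        have h := hg (t - 1 - s) (by omega)
        rw [show t - 1 - s + q' = t + q' - 1 - s from by omega] at h
        exact h
      rw [e1]
      exact Finset.le_sup (f := fun s => mProd (f s) (g (t - 1 - s)) i j)
        (Finset.mem_range.mpr (by omega))
  · refine Finset.sup_le fun s hs => ?_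
    have hs' : s < t := Finset.mem_range.mp hs
    by_cases h1 : T₁ ≤ s
    · have e1 : f s = f (s + q') := (hf s h1).symm
      have e2 : t - 1 - s = t + q' - 1 - (s + q') := by omega
      rw [e1, e2]
      exact Finset.le_sup (f := fun s => mProd (f s) (g (t + q' - 1 - s)) i j)
        (Finset.mem_range.mpr (by omega))
    · have e2 : g (t - 1 - s) = g (t + q' - 1 - s) := by
        have h := (hg (t - 1 - s) (by omega)).symm
        rw [show t - 1 - s + q' = t + q' - 1 - s from by omega] at h
        exact h
      rw [e2]
      exact Finset.le_sup (f := fun s => mProd (f s) (g (t + q' - 1 - s)) i j)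
        (Finset.mem_range.mpr (by omega))

lemma D_per {q' t₀ : ℕ} (hq : 1 ≤ q')
    (hper : ∀ t, t₀ ≤ t → mPow B (t + q') = mPow B t) :
    ∀ w, ∃ T, ∀ t, T ≤ t → Dmat A B w (t + q') = Dmat A B w t := by
  intro w
  induction w with
  | zero => exact ⟨t₀, fun t ht => hper t ht⟩
  | succ w ih =>
      obtain ⟨T, hT⟩ := ih
      refine ⟨t₀ + T + 2 * q' + 2, fun t ht => ?_⟩
      funext i j
      rw [Dmat_succ_apply, Dmat_succ_apply]
      rw [hT t (by omega)]
      congr 1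
      exact conv_per (T₂ := T) (g := fun s => mProd (Aprime A) (Dmat A B w s)) hq hper
        (fun s hsT => by simp only [hT s hsT]) t (by omega) i j

lemma D_const {q' w T : ℕ}
    (hT : ∀ t, T ≤ t → Dmat A B w (t + q') = Dmat A B w t)
    (j N : ℕ) (hN : T ≤ j + N * q') :
    ∀ k, N ≤ k → Dmat A B w (j + k * q') = Dmat A B w (j + N * q') := by
  intro k hk
  induction k, hk using Nat.le_induction with
  | base => rfl
  | succ k hk ih =>
      have h1 : j + N * q' ≤ j + k * q' := by
        have := Nat.mul_le_mul_right q' hk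
        omega
      rw [show j + (k + 1) * q' = (j + k * q') + q' from by ring, hT _ (by omega)]
      exact ih

end Stmt15Aux

namespace Stmt15Aux

variable {n : ℕ} {A B : Matrix (Fin n) (Fin n) NNReal}

lemma abs_sub_le_interval {x y a e : ℝ} (h1 : a ≤ x) (h2 : x ≤ max a e)
    (h3 : a ≤ y) (h4 : y ≤ max a e) (he : 0 ≤ e) (ha : 0 ≤ a) : |x - y| ≤ e := by
  have hm : max a e ≤ a + e := max_le (by linarith) (by linarith)
  rw [abs_le]
  constructor <;> [nlinarith [le_trans h4 hm]; nlinarith [le_trans h2 hm]]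

lemma S_to_T (hA : ∀ i j, A i j ≤ 1) (hB : ∀ i j, B i j = if A i j = 1 then 1 else 0)
    (q' : ℕ) (hq : 1 ≤ q') (t₀ : ℕ)
    (hper : ∀ t, t₀ ≤ t → mPow B (t + q') = mPow B t) (j : ℕ) :
    ∃ L : Matrix (Fin n) (Fin n) NNReal,
      Tendsto (fun k => mPow A (j + k * q')) atTop (nhds L) := by
  set c := cVal A with hcdef
  have hclt1 : c < 1 := cVal_lt_one hA
  have hc : ∀ i j, A i j ≠ 1 → A i j ≤ c := fun i j h => le_cVal i j h
  have hBA : ∀ i j, B i j ≤ A i j := by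
    intro i j
    rw [hB]
    split_ifs with h
    · exact le_of_eq h.symm
    · exact zero_le
  have entry : ∀ i i' : Fin n, ∃ l : NNReal,
      Tendsto (fun k => mPow A (j + k * q') i i') atTop (nhds l) := by
    intro i i'
    have hcauchy : CauchySeq (fun k => mPow A (j + k * q') i i') := by
      rw [Metric.cauchySeq_iff']
      intro ε hε
      obtain ⟨w, hw⟩ : ∃ w : ℕ, ((c : ℝ)) ^ (w + 1) < ε := by
        have h0 : Tendsto (fun w : ℕ => (c : ℝ) ^ w) atTop (nhds 0) :=
          tendsto_pow_atTop_nhds_zero_of_lt_one c.coe_nonneg (by exact_mod_cast hclt1)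
        obtain ⟨w, hw⟩ := (h0.eventually (eventually_lt_nhds hε)).exists
        exact ⟨w, lt_of_le_of_lt
          (pow_le_pow_of_le_one c.coe_nonneg (le_of_lt (by exact_mod_cast hclt1)) (by omega)) hw⟩
      obtain ⟨T, hT⟩ := D_per (A := A) hq hper w
      refine ⟨T, fun k hk => ?_⟩
      have hjT : T ≤ j + T * q' := by
        have := Nat.mul_le_mul_left T hq
        omega
      have hconstk := D_const hT j T hjT k hk
      set P := Dmat A B w (j + T * q') i i' with hPdef
      have hl1 : P ≤ mPow A (j + k * q') i i' := by
        rw [hPdef, ← hconstk]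
        exact D_le hBA w _ i i'
      have hu1 : mPow A (j + k * q') i i' ≤ max P (c ^ (w + 1)) := by
        have h := apow_le hA hB c hc (j + k * q') w i i'
        rwa [hconstk] at h
      have hl2 : P ≤ mPow A (j + T * q') i i' := D_le hBA w _ i i'
      have hu2 : mPow A (j + T * q') i i' ≤ max P (c ^ (w + 1)) :=
        apow_le hA hB c hc (j + T * q') w i i'
      rw [NNReal.dist_eq]
      have cast_max : ((max P (c ^ (w + 1)) : NNReal) : ℝ) = max (P : ℝ) ((c : ℝ) ^ (w + 1)) := by
        push_cast
        rfl
      refine lt_of_le_of_lt (abs_sub_le_interval (a := (P : ℝ)) (e := (c : ℝ) ^ (w + 1))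
        ?_ ?_ ?_ ?_ (by positivity) P.coe_nonneg) hw
      · exact_mod_cast hl1
      · rw [← cast_max]; exact_mod_cast hu1
      · exact_mod_cast hl2
      · rw [← cast_max]; exact_mod_cast hu2
    exact cauchySeq_tendsto_of_complete hcauchy
  choose L hL using entry
  exact ⟨fun i i' => L i i', tendsto_pi_nhds.mpr fun i => tendsto_pi_nhds.mpr fun i' => hL i i'⟩

lemma T_to_S (hA : ∀ i j, A i j ≤ 1) (hB : ∀ i j, B i j = if A i j = 1 then 1 else 0)
    (q' : ℕ) (hq : 1 ≤ q')
    (hconv : ∀ j : ℕ, 1 ≤ j → j ≤ q' → ∃ L : Matrix (Fin n) (Fin n) NNReal,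
      Tendsto (fun k => mPow A (j + k * q')) atTop (nhds L)) :
    ∃ t₀ : ℕ, ∀ t : ℕ, t₀ ≤ t → mPow B (t + q') = mPow B t := by
  set c := cVal A with hcdef
  have hclt1 : c < 1 := cVal_lt_one hA
  have hc : ∀ i j, A i j ≠ 1 → A i j ≤ c := fun i j h => le_cVal i j h
  have key : ∀ j : ℕ, ∃ N : ℕ, 1 ≤ j → j ≤ q' →
      ∀ k, N ≤ k → mPow B (j + (k + 1) * q') = mPow B (j + k * q') := by
    intro j
    by_cases hj : 1 ≤ j ∧ j ≤ q'
    · obtain ⟨L, hL⟩ := hconv j hj.1 hj.2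
      have entry : ∀ i i' : Fin n, ∃ N : ℕ, ∀ k, N ≤ k →
          mPow B (j + (k + 1) * q') i i' = mPow B (j + k * q') i i' := by
        intro i i'
        have hLe : Tendsto (fun k => mPow A (j + k * q') i i') atTop (nhds (L i i')) :=
          tendsto_pi_nhds.mp (tendsto_pi_nhds.mp hL i) i'
        by_cases hl : c < L i i'
        · have hev : ∀ᶠ k in atTop, c < mPow A (j + k * q') i i' :=
            hLe.eventually (eventually_gt_nhds hl)
          obtain ⟨N, hN⟩ := eventually_atTop.mp hev
          refine ⟨N, fun k hk => ?_⟩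
          have h1 : mPow A (j + k * q') i i' = 1 :=
            (pow_dichotomy hA c hc _ i i').resolve_right (not_le.mpr (hN k hk))
          have h2 : mPow A (j + (k + 1) * q') i i' = 1 :=
            (pow_dichotomy hA c hc _ i i').resolve_right (not_le.mpr (hN (k + 1) (by omega)))
          rw [bpow_eq hA hB, bpow_eq hA hB, if_pos h1, if_pos h2]
        · have hl1 : L i i' < 1 := lt_of_le_of_lt (not_lt.mp hl) hclt1
          have hev : ∀ᶠ k in atTop, mPow A (j + k * q') i i' < 1 :=
            hLe.eventually (eventually_lt_nhds hl1)
          obtain ⟨N, hN⟩ := eventually_atTop.mp hev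
          refine ⟨N, fun k hk => ?_⟩
          have h1 : mPow A (j + k * q') i i' ≠ 1 := ne_of_lt (hN k hk)
          have h2 : mPow A (j + (k + 1) * q') i i' ≠ 1 := ne_of_lt (hN (k + 1) (by omega))
          rw [bpow_eq hA hB, bpow_eq hA hB, if_neg h1, if_neg h2]
      choose Ne hNe using entry
      refine ⟨Finset.univ.sup fun i => Finset.univ.sup fun i' => Ne i i', fun _ _ k hk => ?_⟩
      funext i i'
      refine hNe i i' k (le_trans ?_ hk)
      exact le_trans (Finset.le_sup (f := fun i' => Ne i i') (Finset.mem_univ i'))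
        (Finset.le_sup (f := fun i => Finset.univ.sup fun i' => Ne i i') (Finset.mem_univ i))
    · exact ⟨0, fun h1 h2 => absurd ⟨h1, h2⟩ hj⟩
  choose N hN using key
  set M := (Finset.range (q' + 1)).sup N with hMdef
  refine ⟨M * q' + 1, fun t ht => ?_⟩
  obtain ⟨r, k, hr1, hr2, hk, heq⟩ :
      ∃ r k, 1 ≤ r ∧ r ≤ q' ∧ M ≤ k ∧ t = r + k * q' := by
    refine ⟨(t - 1) % q' + 1, (t - 1) / q', by omega, ?_, ?_, ?_⟩
    · have := Nat.mod_lt (t - 1) (show 0 < q' by omega)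
      omega
    · rw [Nat.le_div_iff_mul_le (show 0 < q' by omega)]
      omega
    · have := Nat.mod_add_div' (t - 1) q'
      omega
  have hNr : N r ≤ M := Finset.le_sup (Finset.mem_range.mpr (by omega))
  have := hN r hr1 hr2 k (le_trans hNr hk)
  rw [heq, show r + k * q' + q' = r + (k + 1) * q' from by ring]
  exact this

end Stmt15Aux


theorem stmt_15 (n : ℕ) (A B : Matrix (Fin n) (Fin n) NNReal)
    (hA : ∀ i j, A i j ≤ 1)
    (hB : ∀ i j, B i j = if A i j = 1 then 1 else 0)
    (q : ℕ) (hq : 1 ≤ q) :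
    IsLeast {q' : ℕ | 1 ≤ q' ∧ ∃ t₀ : ℕ, ∀ t : ℕ, t₀ ≤ t → mPow B (t + q') = mPow B t} q ↔
      IsLeast {q' : ℕ | 1 ≤ q' ∧ ∀ j : ℕ, 1 ≤ j → j ≤ q' →
        ∃ L : Matrix (Fin n) (Fin n) NNReal,
          Tendsto (fun k => mPow A (j + k * q')) atTop (nhds L)} q := by
  have hST : ∀ q' : ℕ, (1 ≤ q' ∧ ∃ t₀ : ℕ, ∀ t : ℕ, t₀ ≤ t → mPow B (t + q') = mPow B t) ↔
      (1 ≤ q' ∧ ∀ j : ℕ, 1 ≤ j → j ≤ q' →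
        ∃ L : Matrix (Fin n) (Fin n) NNReal,
          Tendsto (fun k => mPow A (j + k * q')) atTop (nhds L)) := by
    intro q'
    constructor
    · rintro ⟨hq1, t₀, hper⟩
      exact ⟨hq1, fun j _ _ => Stmt15Aux.S_to_T hA hB q' hq1 t₀ hper j⟩
    · rintro ⟨hq1, hconv⟩
      exact ⟨hq1, Stmt15Aux.T_to_S hA hB q' hq1 hconv⟩
  constructor
  · rintro ⟨hmem, hlb⟩
    exact ⟨(hST q).mp hmem, fun q'' hq'' => hlb ((hST q'').mpr hq'')⟩
  · rintro ⟨hmem, hlb⟩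
    exact ⟨(hST q).mpr hmem, fun q'' hq'' => hlb ((hST q'').mp hq'')⟩
end

section
/- Let A_1, …, A_N be n×n nonnegative matrices that pairwise commute with respect to the max-times product and satisfy μ(A_i) ≤ 1 for every i. Then for every p ≥ 1 and every word ω = (ω_1,…,ω_p) ∈ {1,…,N}^p, the associated product A_ω = A_{ω_p} ⊗ ⋯ ⊗ A_{ω_1} satisfies μ(A_ω) ≤ μ(A_{ω_p})·μ(A_{ω_{p−1}})⋯μ(A_{ω_1}) ≤ 1. -/
open Filter Topology

/-- The max-times product `A_{ω_p} ⊗ ⋯ ⊗ A_{ω_1}` associated to a word `ω`. -/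
noncomputable def wordProd {m : Type*} [Fintype m] [DecidableEq m] {N : ℕ}
    (A : Fin N → Matrix m m NNReal) : ∀ {p : ℕ}, (Fin p → Fin N) → Matrix m m NNReal
  | 0, _ => 1
  | p + 1, ω => mProd (A (ω (Fin.last p))) (wordProd A fun i : Fin p => ω i.castSucc)

open Finset in
section

section Alg
set_option linter.unusedSectionVars false
variable {m : Type*} [Fintype m] [DecidableEq m]

lemma sup_mul_nn {α : Type*} (s : Finset α) (f : α → NNReal) (c : NNReal) :
    s.sup f * c = s.sup fun x => f x * c := by
  refine Eq.trans (Finset.comp_sup_eq_sup_comp (· * c) (fun x y => ?_) (by simp)) rfl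
  rcases le_total x y with h | h
  · simp [max_eq_right h, max_eq_right (mul_le_mul_left h c)]
  · simp [max_eq_left h, max_eq_left (mul_le_mul_left h c)]

lemma mul_sup_nn {α : Type*} (s : Finset α) (f : α → NNReal) (c : NNReal) :
    c * s.sup f = s.sup fun x => c * f x := by
  rw [mul_comm, sup_mul_nn]; simp [mul_comm]

lemma mProd_assoc (A B C : Matrix m m NNReal) :
    mProd (mProd A B) C = mProd A (mProd B C) := by
  funext i j
  show (univ.sup fun k => (univ.sup fun l => A i l * B l k) * C k j)
      = univ.sup fun l => A i l * univ.sup fun k => B l k * C k j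
  calc (univ.sup fun k => (univ.sup fun l => A i l * B l k) * C k j)
      = univ.sup fun k => univ.sup fun l => A i l * B l k * C k j := by
        refine Finset.sup_congr rfl fun k _ => ?_
        rw [sup_mul_nn]
    _ = univ.sup fun l => univ.sup fun k => A i l * B l k * C k j := Finset.sup_comm _ _ _
    _ = univ.sup fun l => A i l * univ.sup fun k => B l k * C k j := by
        refine Finset.sup_congr rfl fun l _ => ?_
        rw [mul_sup_nn]
        simp [mul_assoc]

lemma mProd_one (A : Matrix m m NNReal) : mProd A 1 = A := by
  funext i j
  show (univ.sup fun k => A i k * (1 : Matrix m m NNReal) k j) = A i j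
  apply le_antisymm
  · apply Finset.sup_le
    intro k _
    by_cases h : k = j
    · subst h; simp [Matrix.one_apply_eq]
    · simp [Matrix.one_apply_ne h]
  · have := Finset.le_sup (f := fun k => A i k * (1 : Matrix m m NNReal) k j)
      (Finset.mem_univ j)
    simpa [Matrix.one_apply_eq] using this

lemma one_mProd (A : Matrix m m NNReal) : mProd 1 A = A := by
  funext i j
  show (univ.sup fun k => (1 : Matrix m m NNReal) i k * A k j) = A i j
  apply le_antisymm
  · apply Finset.sup_le
    intro k _
    by_cases h : i = k
    · subst h; simp [Matrix.one_apply_eq]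
    · simp [Matrix.one_apply_ne h]
  · have := Finset.le_sup (f := fun k => (1 : Matrix m m NNReal) i k * A k j)
      (Finset.mem_univ i)
    simpa [Matrix.one_apply_eq] using this

lemma mPow_one' (A : Matrix m m NNReal) : mPow A 1 = A := by
  show mProd A (mPow A 0) = A
  show mProd A 1 = A
  exact mProd_one A

lemma mPow_add (A : Matrix m m NNReal) (a b : ℕ) :
    mPow A (a + b) = mProd (mPow A a) (mPow A b) := by
  induction a with
  | zero => simp [mPow, one_mProd]
  | succ a ih =>
      have : a + 1 + b = (a + b) + 1 := by omega
      rw [this]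
      show mProd A (mPow A (a + b)) = mProd (mProd A (mPow A a)) (mPow A b)
      rw [ih, mProd_assoc]

lemma mProd_mPow_comm {A B : Matrix m m NNReal} (h : mProd A B = mProd B A) (k : ℕ) :
    mProd A (mPow B k) = mProd (mPow B k) A := by
  induction k with
  | zero => show mProd A 1 = mProd 1 A; rw [mProd_one, one_mProd]
  | succ k ih =>
      show mProd A (mProd B (mPow B k)) = mProd (mProd B (mPow B k)) A
      rw [← mProd_assoc, h, mProd_assoc, ih, ← mProd_assoc]

lemma mPow_mProd {A B : Matrix m m NNReal} (h : mProd A B = mProd B A) (k : ℕ) :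
    mPow (mProd A B) k = mProd (mPow A k) (mPow B k) := by
  induction k with
  | zero => show (1 : Matrix m m NNReal) = mProd 1 1; rw [mProd_one]
  | succ k ih =>
      show mProd (mProd A B) (mPow (mProd A B) k)
          = mProd (mProd A (mPow A k)) (mProd B (mPow B k))
      rw [ih]
      calc mProd (mProd A B) (mProd (mPow A k) (mPow B k))
          = mProd A (mProd (mProd B (mPow A k)) (mPow B k)) := by
            rw [mProd_assoc, mProd_assoc]
        _ = mProd A (mProd (mProd (mPow A k) B) (mPow B k)) := by
            rw [mProd_mPow_comm (A := B) (B := A) h.symm k]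
        _ = mProd (mProd A (mPow A k)) (mProd B (mPow B k)) := by
            rw [mProd_assoc, mProd_assoc]

end Alg

section MTWalk
set_option linter.unusedSectionVars false
variable {m : Type*} [Fintype m] [DecidableEq m]



lemma walk_le (A : Matrix m m NNReal) :
    ∀ (L : ℕ) (f : ℕ → m),
      (∏ t ∈ Finset.range L, A (f t) (f (t + 1))) ≤ mPow A L (f 0) (f L) := by
  intro L
  induction L with
  | zero => intro f; simp [mPow, Matrix.one_apply_eq]
  | succ L ih =>
      intro f
      rw [Finset.prod_range_succ' (fun t => A (f t) (f (t + 1))) L]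
      have h1 : (∏ t ∈ Finset.range L, A (f (t + 1)) (f (t + 1 + 1)))
          ≤ mPow A L (f 1) (f (L + 1)) := ih (fun t => f (t + 1))
      calc (∏ t ∈ Finset.range L, A (f (t + 1)) (f (t + 1 + 1))) * A (f 0) (f 1)
          ≤ mPow A L (f 1) (f (L + 1)) * A (f 0) (f 1) := mul_le_mul_left h1 _
        _ = A (f 0) (f 1) * mPow A L (f 1) (f (L + 1)) := mul_comm _ _
        _ ≤ mPow A (L + 1) (f 0) (f (L + 1)) :=
            Finset.le_sup (f := fun k => A (f 0) k * mPow A L k (f (L + 1)))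
              (Finset.mem_univ (f 1))

lemma exists_walk (A : Matrix m m NNReal) :
    ∀ (L : ℕ), 1 ≤ L → ∀ i j : m, ∃ f : ℕ → m, f 0 = i ∧ f L = j ∧
      mPow A L i j = ∏ t ∈ Finset.range L, A (f t) (f (t + 1)) := by
  intro L hL
  induction L, hL using Nat.le_induction with
  | base =>
      intro i j
      refine ⟨fun t => if t = 0 then i else j, rfl, rfl, ?_⟩
      simp [mPow_one']
  | succ L hL ih =>
      intro i j
      have hne : (Finset.univ : Finset m).Nonempty := ⟨j, Finset.mem_univ j⟩
      obtain ⟨k, -, hk⟩ := Finset.exists_mem_eq_sup Finset.univ hne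
        (fun k => A i k * mPow A L k j)
      obtain ⟨f, hf0, hfL, hfw⟩ := ih k j
      set F : ℕ → m := fun t => if t = 0 then i else f (t - 1) with hF
      refine ⟨F, rfl, by simp [hF, hfL], ?_⟩
      have h0 : mPow A (L + 1) i j = A i k * mPow A L k j := hk
      have e : ∀ t ∈ Finset.range L, A (F (t + 1)) (F (t + 1 + 1)) = A (f t) (f (t + 1)) := by
        intro t _; simp [hF]
      have hF0 : F 0 = i := by simp [hF]
      have hF1 : F 1 = k := by simp [hF, hf0]
      rw [h0, Finset.prod_range_succ', Finset.prod_congr rfl e, ← hfw, hF0, hF1, mul_comm]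

lemma diag_le_mu (A : Matrix m m NNReal) {c : ℕ} (hc1 : 1 ≤ c) (hcn : c ≤ Fintype.card m)
    (i : m) : mPow A c i i ≤ mu A ^ c := by
  have h1 : (mPow A c i i) ^ ((c : ℝ)⁻¹) ≤ mu A := by
    refine le_trans ?_ (Finset.le_sup (Finset.mem_Icc.mpr ⟨hc1, hcn⟩))
    exact Finset.le_sup (f := fun i => (mPow A c i i) ^ ((c : ℝ)⁻¹)) (Finset.mem_univ i)
  have hc0 : (c : ℝ) ≠ 0 := Nat.cast_ne_zero.mpr (by omega)
  have h2 : ((mPow A c i i) ^ ((c : ℝ)⁻¹)) ^ (c : ℝ) ≤ (mu A) ^ (c : ℝ) :=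
    NNReal.rpow_le_rpow h1 (by positivity)
  rwa [← NNReal.rpow_mul, inv_mul_cancel₀ hc0, NNReal.rpow_one, NNReal.rpow_natCast] at h2

noncomputable def bigM (A : Matrix m m NNReal) : NNReal :=
  (Finset.range (Fintype.card m + 1)).sup fun d =>
    Finset.univ.sup fun i => Finset.univ.sup fun j => mPow A d i j

lemma decay (A : Matrix m m NNReal) (hA : mu A ≤ 1) :
    ∀ (L : ℕ) (i j : m), mPow A L i j ≤ mu A ^ (L - Fintype.card m) * bigM A := by
  intro L
  induction L using Nat.strong_induction_on with
  | _ L ih =>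
  intro i j
  set n := Fintype.card m with hn
  by_cases hL : L ≤ n
  · rw [Nat.sub_eq_zero_of_le hL, pow_zero, one_mul]
    refine le_trans (Finset.le_sup (f := fun j => mPow A L i j) (Finset.mem_univ j)) ?_
    refine le_trans (Finset.le_sup (f := fun i => univ.sup fun j => mPow A L i j)
      (Finset.mem_univ i)) ?_
    exact Finset.le_sup (f := fun d => univ.sup fun i => univ.sup fun j => mPow A d i j)
      (Finset.mem_range.mpr (Nat.lt_succ_of_le hL))
  · push_neg at hL
    obtain ⟨f, hf0, hfL, hw⟩ := exists_walk A L (by omega) i j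
    have hcard : Fintype.card m < Fintype.card (Fin (n + 1)) := by simp [hn]
    obtain ⟨a, b, hab, hval⟩ :=
      Fintype.exists_ne_map_eq_of_card_lt (fun x : Fin (n + 1) => f x) hcard
    -- reduce to s < t
    have key : ∀ s t : ℕ, s < t → t ≤ n → f s = f t →
        mPow A L i j ≤ mu A ^ (L - n) * bigM A := by
      intro s t hst ht heq
      set c := t - s with hc
      have hc1 : 1 ≤ c := by omega
      have hcn : c ≤ n := by omega
      have hsc : s + c = t := by omega
      set g : ℕ → m := fun u => if u < s then f u else f (u + c) with hg
      have hsplit : (∏ u ∈ Finset.range L, A (f u) (f (u + 1)))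
          = (∏ u ∈ Finset.range c, A (f (s + u)) (f (s + u + 1)))
            * ∏ u ∈ Finset.range (L - c), A (g u) (g (u + 1)) := by
        have hL1 : L = s + (c + (L - t)) := by omega
        have hL2 : L - c = s + (L - t) := by omega
        conv_lhs => rw [hL1]
        rw [Finset.prod_range_add, Finset.prod_range_add, hL2, Finset.prod_range_add]
        have e1 : ∀ u ∈ Finset.range s, A (g u) (g (u + 1)) = A (f u) (f (u + 1)) := by
          intro u hu
          rw [Finset.mem_range] at hu
          have hgu : g u = f u := by simp [hg, hu]
          have hgu1 : g (u + 1) = f (u + 1) := by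
            by_cases h : u + 1 < s
            · simp [hg, h]
            · have hus : u + 1 = s := by omega
              have h3 : g (u + 1) = f t := by
                simp only [hg]; rw [if_neg h]; congr 1; omega
              rw [h3, ← heq, hus]
          rw [hgu, hgu1]
        have e2 : ∀ u ∈ Finset.range (L - t),
            A (g (s + u)) (g (s + u + 1)) = A (f (s + (c + u))) (f (s + (c + u) + 1)) := by
          intro u hu
          have h1 : ¬ (s + u < s) := by omega
          have h2 : ¬ (s + u + 1 < s) := by omega
          simp only [hg, if_neg h1, if_neg h2]
          congr 2 <;> omega
        rw [Finset.prod_congr rfl e1, Finset.prod_congr rfl e2]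
        ring
      have hcirc : (∏ u ∈ Finset.range c, A (f (s + u)) (f (s + u + 1))) ≤ mu A ^ c := by
        have h1 := walk_le A c (fun u => f (s + u))
        simp only [Nat.add_zero] at h1
        have h2 : f (s + c) = f s := by rw [hsc, heq]
        rw [h2] at h1
        exact le_trans h1 (diag_le_mu A hc1 hcn (f s))
      have hrest : (∏ u ∈ Finset.range (L - c), A (g u) (g (u + 1)))
          ≤ mPow A (L - c) i j := by
        have h1 := walk_le A (L - c) g
        have hg0 : g 0 = i := by
          by_cases h : 0 < s
          · simp [hg, h, hf0]
          · have hs0 : s = 0 := by omega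
            have : g 0 = f c := by simp [hg, hs0]
            rw [this]
            have : c = t := by omega
            rw [this, ← heq, hs0, hf0]
        have hgL : g (L - c) = j := by
          have h1 : ¬ (L - c < s) := by omega
          have h2 : L - c + c = L := by omega
          simp only [hg, if_neg h1, h2, hfL]
        rwa [hg0, hgL] at h1
      have hih : mPow A (L - c) i j ≤ mu A ^ (L - c - n) * bigM A := ih (L - c) (by omega) i j
      calc mPow A L i j
          = (∏ u ∈ Finset.range c, A (f (s + u)) (f (s + u + 1)))
            * ∏ u ∈ Finset.range (L - c), A (g u) (g (u + 1)) := by rw [hw, hsplit]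
        _ ≤ mu A ^ c * (mu A ^ (L - c - n) * bigM A) :=
            mul_le_mul' hcirc (le_trans hrest hih)
        _ = mu A ^ (c + (L - c - n)) * bigM A := by rw [← mul_assoc, ← pow_add]
        _ ≤ mu A ^ (L - n) * bigM A := by
            refine mul_le_mul_left ?_ _
            exact pow_le_pow_of_le_one (by positivity) hA (by omega)
    rcases lt_or_gt_of_ne hab with h | h
    · exact key a b h (Fin.is_le b) hval
    · exact key b a h (Fin.is_le a) hval.symm

end MTWalk


section Key
set_option linter.unusedSectionVars false
variable {m : Type*} [Fintype m] [DecidableEq m]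

lemma diag_pow_le (C : Matrix m m NNReal) (ℓ : ℕ) (i : m) :
    ∀ k : ℕ, (mPow C ℓ i i) ^ k ≤ mPow C (ℓ * k) i i := by
  intro k
  induction k with
  | zero => simp [mPow, Matrix.one_apply_eq]
  | succ k ih =>
      have h1 : ℓ * (k + 1) = ℓ * k + ℓ := by ring
      rw [h1, mPow_add, pow_succ]
      calc (mPow C ℓ i i) ^ k * mPow C ℓ i i
          ≤ mPow C (ℓ * k) i i * mPow C ℓ i i := mul_le_mul_left ih _
        _ ≤ mProd (mPow C (ℓ * k)) (mPow C ℓ) i i :=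
            Finset.le_sup (f := fun j => mPow C (ℓ * k) i j * mPow C ℓ j i)
              (Finset.mem_univ i)

lemma mu_mProd_le {A B : Matrix m m NNReal} (h : mProd A B = mProd B A)
    (hA : mu A ≤ 1) (hB : mu B ≤ 1) : mu (mProd A B) ≤ mu A * mu B := by
  set n := Fintype.card m with hn
  apply Finset.sup_le
  intro ℓ hℓ
  apply Finset.sup_le
  intro i _
  obtain ⟨hℓ1, hℓn⟩ := Finset.mem_Icc.mp hℓ
  suffices hx : mPow (mProd A B) ℓ i i ≤ (mu A * mu B) ^ ℓ by
    have hrr : (mPow (mProd A B) ℓ i i) ^ ((ℓ : ℝ)⁻¹)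
        ≤ ((mu A * mu B) ^ ℓ) ^ ((ℓ : ℝ)⁻¹) := NNReal.rpow_le_rpow hx (by positivity)
    have hℓ0 : (ℓ : ℝ) ≠ 0 := Nat.cast_ne_zero.mpr (by omega)
    calc (mPow (mProd A B) ℓ i i) ^ ((ℓ : ℝ)⁻¹)
        ≤ ((mu A * mu B) ^ ℓ) ^ ((ℓ : ℝ)⁻¹) := hrr
      _ = mu A * mu B := by
          rw [← NNReal.rpow_natCast (mu A * mu B) ℓ, ← NNReal.rpow_mul,
            mul_inv_cancel₀ hℓ0, NNReal.rpow_one]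
  set x := mPow (mProd A B) ℓ i i with hxdef
  set K := bigM A * bigM B with hK
  have step2 : ∀ k : ℕ, x ^ k ≤ mu A ^ (ℓ * k - n) * mu B ^ (ℓ * k - n) * K := by
    intro k
    refine le_trans (diag_pow_le (mProd A B) ℓ i k) ?_
    rw [mPow_mProd h]
    apply Finset.sup_le
    intro j _
    calc mPow A (ℓ * k) i j * mPow B (ℓ * k) j i
        ≤ (mu A ^ (ℓ * k - n) * bigM A) * (mu B ^ (ℓ * k - n) * bigM B) :=
          mul_le_mul' (decay A hA (ℓ * k) i j) (decay B hB (ℓ * k) j i)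
      _ = mu A ^ (ℓ * k - n) * mu B ^ (ℓ * k - n) * K := by rw [hK]; ring
  by_cases hz : mu A * mu B = 0
  · have h1 := step2 (n + 1)
    have he : ℓ * (n + 1) - n ≠ 0 := by
      have : n + 1 ≤ ℓ * (n + 1) := Nat.le_mul_of_pos_left _ (by omega)
      omega
    have h2 : mu A ^ (ℓ * (n + 1) - n) * mu B ^ (ℓ * (n + 1) - n) = 0 := by
      rw [← mul_pow, hz, zero_pow he]
    rw [h2, zero_mul] at h1
    have hx0 : x = 0 := by
      have := le_antisymm h1 (by positivity)
      exact pow_eq_zero_iff (by omega) |>.mp this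
    rw [hx0]; positivity
  · set μ := mu A * mu B with hμ
    have hpos : 0 < μ := pos_iff_ne_zero.mpr hz
    by_contra hlt
    push_neg at hlt
    have hy : 0 < μ ^ ℓ := pow_pos hpos ℓ
    have hr : 1 < x / μ ^ ℓ := (one_lt_div hy).mpr hlt
    have hbound : ∀ k : ℕ, n ≤ k → (x / μ ^ ℓ) ^ k ≤ K / μ ^ n := by
      intro k hk
      have hnk : n ≤ ℓ * k := le_trans hk (Nat.le_mul_of_pos_left _ (by omega))
      have he : ℓ * k - n + n = ℓ * k := Nat.sub_add_cancel hnk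
      have h1 : x ^ k ≤ μ ^ (ℓ * k - n) * K := by
        have := step2 k
        rwa [← mul_pow] at this
      have h2 : x ^ k * μ ^ n ≤ μ ^ (ℓ * k) * K := by
        calc x ^ k * μ ^ n ≤ μ ^ (ℓ * k - n) * K * μ ^ n := mul_le_mul_left h1 _
          _ = μ ^ (ℓ * k - n + n) * K := by rw [pow_add]; ring
          _ = μ ^ (ℓ * k) * K := by rw [he]
      rw [div_pow, ← pow_mul]
      rw [div_le_div_iff₀ (pow_pos hpos (ℓ * k)) (pow_pos hpos n)]
      calc x ^ k * μ ^ n ≤ μ ^ (ℓ * k) * K := h2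
        _ = K * μ ^ (ℓ * k) := mul_comm _ _
    obtain ⟨k0, hk0⟩ := pow_unbounded_of_one_lt (K / μ ^ n) hr
    have h3 : (x / μ ^ ℓ) ^ k0 ≤ (x / μ ^ ℓ) ^ (max k0 n) :=
      pow_le_pow_right₀ hr.le (le_max_left _ _)
    exact absurd (hbound (max k0 n) (le_max_right _ _))
      (not_le.mpr (lt_of_lt_of_le hk0 h3))

lemma mu_one_le : mu (1 : Matrix m m NNReal) ≤ 1 := by
  have hpow : ∀ ℓ : ℕ, mPow (1 : Matrix m m NNReal) ℓ = 1 := by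
    intro ℓ
    induction ℓ with
    | zero => rfl
    | succ ℓ ih => show mProd 1 (mPow 1 ℓ) = 1; rw [ih, mProd_one]
  apply Finset.sup_le
  intro ℓ _
  apply Finset.sup_le
  intro i _
  rw [hpow, Matrix.one_apply_eq, NNReal.one_rpow]

end Key

section Word
set_option linter.unusedSectionVars false
variable {m : Type*} [Fintype m] [DecidableEq m] {N : ℕ}

lemma wordProd_comm (A : Fin N → Matrix m m NNReal)
    (hcomm : ∀ i i', mProd (A i) (A i') = mProd (A i') (A i)) (j : Fin N) :
    ∀ {p : ℕ} (ω : Fin p → Fin N),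
      mProd (A j) (wordProd A ω) = mProd (wordProd A ω) (A j) := by
  intro p
  induction p with
  | zero => intro ω; show mProd (A j) 1 = mProd 1 (A j); rw [mProd_one, one_mProd]
  | succ p ih =>
      intro ω
      show mProd (A j) (mProd (A (ω (Fin.last p))) (wordProd A fun i : Fin p => ω i.castSucc))
        = mProd (mProd (A (ω (Fin.last p))) (wordProd A fun i : Fin p => ω i.castSucc)) (A j)
      rw [← mProd_assoc, hcomm j (ω (Fin.last p)), mProd_assoc,
        ih (fun i : Fin p => ω i.castSucc), ← mProd_assoc]

lemma wordProd_mu_le (A : Fin N → Matrix m m NNReal)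
    (hcomm : ∀ i i', mProd (A i) (A i') = mProd (A i') (A i))
    (hmu : ∀ i, mu (A i) ≤ 1) :
    ∀ {p : ℕ} (ω : Fin p → Fin N),
      mu (wordProd A ω) ≤ ∏ t : Fin p, mu (A (ω t)) ∧
        (∏ t : Fin p, mu (A (ω t))) ≤ 1 := by
  intro p
  induction p with
  | zero =>
      intro ω
      constructor
      · simpa [wordProd] using (mu_one_le : mu (1 : Matrix m m NNReal) ≤ 1)
      · simp
  | succ p ih =>
      intro ω
      obtain ⟨ih1, ih2⟩ := ih (fun i : Fin p => ω i.castSucc)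
      have hprod : (∏ t : Fin (p + 1), mu (A (ω t)))
          = (∏ t : Fin p, mu (A (ω t.castSucc))) * mu (A (ω (Fin.last p))) :=
        Fin.prod_univ_castSucc _
      have hWle1 : mu (wordProd A fun i : Fin p => ω i.castSucc) ≤ 1 := ih1.trans ih2
      have h1 : mu (wordProd A ω) ≤ mu (A (ω (Fin.last p)))
          * mu (wordProd A fun i : Fin p => ω i.castSucc) := by
        show mu (mProd (A (ω (Fin.last p))) (wordProd A fun i : Fin p => ω i.castSucc)) ≤ _
        exact mu_mProd_le (wordProd_comm A hcomm (ω (Fin.last p)) _)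
          (hmu _) hWle1
      constructor
      · rw [hprod]
        calc mu (wordProd A ω)
            ≤ mu (A (ω (Fin.last p))) * mu (wordProd A fun i : Fin p => ω i.castSucc) := h1
          _ ≤ mu (A (ω (Fin.last p))) * ∏ t : Fin p, mu (A (ω t.castSucc)) :=
              mul_le_mul_right ih1 _
          _ = (∏ t : Fin p, mu (A (ω t.castSucc))) * mu (A (ω (Fin.last p))) := mul_comm _ _
      · rw [hprod]
        calc (∏ t : Fin p, mu (A (ω t.castSucc))) * mu (A (ω (Fin.last p)))
            ≤ 1 * 1 := mul_le_mul' ih2 (hmu _)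
          _ = 1 := one_mul 1

end Word

end

theorem stmt_18 (n N : ℕ) (A : Fin N → Matrix (Fin n) (Fin n) NNReal)
    (hcomm : ∀ i i', mProd (A i) (A i') = mProd (A i') (A i))
    (hmu : ∀ i, mu (A i) ≤ 1)
    (p : ℕ) (hp : 1 ≤ p) (ω : Fin p → Fin N) :
    mu (wordProd A ω) ≤ ∏ t : Fin p, mu (A (ω t)) ∧
      (∏ t : Fin p, mu (A (ω t))) ≤ 1 := by
  exact wordProd_mu_le A hcomm hmu ω
end
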